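/- For the database D of the previous context (r0 over {A,B,C} with tuples {(a,b,c1),(a,b1,c),(a1,b,c)}, r1={(a,b),(a,b1),(a1,b)}, r2={(a,c),(a,c1),(a1,c)}, r3={(b,c),(b,c1),(b1,c)}), the join r1 ⋈ r2 ⋈ r3 contains the tuple (a,b,c), but (a,b,c) does not join with any tuple of r0; hence the subjoin r1 ⋈ r2 ⋈ r3 produces a dangling tuple with respect to r0 even though D is fully reduced. -/
import Mathlib


/-- A tuple `t` agrees with tuple `u` on the attribute set `S`. -/
def Agrees {α V : Type} (S : Set α) (t u : α → V) : Prop := ∀ a ∈ S, t a = u a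

/-- The output of the natural join of the relations `R i` with schemas `s i`. -/
def JoinOut {ι α V : Type} (s : ι → Set α) (R : ι → Set (α → V)) : Set (α → V) :=
  { t | ∀ i, ∃ u ∈ R i, Agrees (s i) t u }

/-- The output of the join of the subfamily of relations indexed by `K`. -/
def SubJoinOut {ι α V : Type} (s : ι → Set α) (R : ι → Set (α → V)) (K : Set ι) :
    Set (α → V) :=
  { t | ∀ i ∈ K, ∃ u ∈ R i, Agrees (s i) t u }

/-- A database is fully reduced if every tuple of every relation is the projection of
some tuple in the full join output. -/
def FullyReduced {ι α V : Type} (s : ι → Set α) (R : ι → Set (α → V)) : Prop :=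
  ∀ i, ∀ u ∈ R i, ∃ t ∈ JoinOut s R, Agrees (s i) t u

/-- For the database D of Example 1 (which is fully reduced), the subjoin
r1 ⋈ r2 ⋈ r3 (indices {1,2,3}) contains the tuple (a,b,c), but (a,b,c) agrees with no
tuple of r0 on their common attributes {A,B,C}: the subjoin produces a dangling tuple
with respect to r0 even though D is fully reduced. -/
theorem stmt1 {V : Type} (a a1 b b1 c c1 : V)
    (hdist : List.Pairwise (· ≠ ·) [a, a1, b, b1, c, c1])
    (s : Fin 4 → Set (Fin 3))
    (hs : s = ![Set.univ, {0, 1}, {0, 2}, {1, 2}])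
    (R : Fin 4 → Set (Fin 3 → V))
    (hR : R = ![ {![a, b, c1], ![a, b1, c], ![a1, b, c]},
                 {u | (u 0 = a ∧ u 1 = b) ∨ (u 0 = a ∧ u 1 = b1) ∨ (u 0 = a1 ∧ u 1 = b)},
                 {u | (u 0 = a ∧ u 2 = c) ∨ (u 0 = a ∧ u 2 = c1) ∨ (u 0 = a1 ∧ u 2 = c)},
                 {u | (u 1 = b ∧ u 2 = c) ∨ (u 1 = b ∧ u 2 = c1) ∨ (u 1 = b1 ∧ u 2 = c)} ]) :
    FullyReduced s R ∧
    ![a, b, c] ∈ SubJoinOut s R {1, 2, 3} ∧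
    ∀ u ∈ R 0, ¬ Agrees (Set.univ : Set (Fin 3)) ![a, b, c] u := by
  subst hs hR
  simp only [List.pairwise_cons, List.mem_cons, List.not_mem_nil, List.mem_singleton] at hdist
  have haa1 : a ≠ a1 := hdist.1 a1 (by simp)
  have hbb1 : b ≠ b1 := hdist.2.2.1 b1 (by simp)
  have hcc1 : c ≠ c1 := hdist.2.2.2.2.1 c1 (by simp)
  -- the three r0 tuples are in the full join output (each joins with itself)
  have J1 : ![a, b, c1] ∈ JoinOut ![Set.univ, {0, 1}, {0, 2}, {1, 2}]
      ![ {![a, b, c1], ![a, b1, c], ![a1, b, c]},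
         {u | (u 0 = a ∧ u 1 = b) ∨ (u 0 = a ∧ u 1 = b1) ∨ (u 0 = a1 ∧ u 1 = b)},
         {u | (u 0 = a ∧ u 2 = c) ∨ (u 0 = a ∧ u 2 = c1) ∨ (u 0 = a1 ∧ u 2 = c)},
         {u | (u 1 = b ∧ u 2 = c) ∨ (u 1 = b ∧ u 2 = c1) ∨ (u 1 = b1 ∧ u 2 = c)} ] := by
    intro i
    refine ⟨![a, b, c1], ?_, fun x _ => rfl⟩
    fin_cases i <;> simp [Matrix.cons_val_zero, Matrix.cons_val_one]
  have J2 : ![a, b1, c] ∈ JoinOut ![Set.univ, {0, 1}, {0, 2}, {1, 2}]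
      ![ {![a, b, c1], ![a, b1, c], ![a1, b, c]},
         {u | (u 0 = a ∧ u 1 = b) ∨ (u 0 = a ∧ u 1 = b1) ∨ (u 0 = a1 ∧ u 1 = b)},
         {u | (u 0 = a ∧ u 2 = c) ∨ (u 0 = a ∧ u 2 = c1) ∨ (u 0 = a1 ∧ u 2 = c)},
         {u | (u 1 = b ∧ u 2 = c) ∨ (u 1 = b ∧ u 2 = c1) ∨ (u 1 = b1 ∧ u 2 = c)} ] := by
    intro i
    refine ⟨![a, b1, c], ?_, fun x _ => rfl⟩
    fin_cases i <;> simp [Matrix.cons_val_zero, Matrix.cons_val_one]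
  have J3 : ![a1, b, c] ∈ JoinOut ![Set.univ, {0, 1}, {0, 2}, {1, 2}]
      ![ {![a, b, c1], ![a, b1, c], ![a1, b, c]},
         {u | (u 0 = a ∧ u 1 = b) ∨ (u 0 = a ∧ u 1 = b1) ∨ (u 0 = a1 ∧ u 1 = b)},
         {u | (u 0 = a ∧ u 2 = c) ∨ (u 0 = a ∧ u 2 = c1) ∨ (u 0 = a1 ∧ u 2 = c)},
         {u | (u 1 = b ∧ u 2 = c) ∨ (u 1 = b ∧ u 2 = c1) ∨ (u 1 = b1 ∧ u 2 = c)} ] := by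
    intro i
    refine ⟨![a1, b, c], ?_, fun x _ => rfl⟩
    fin_cases i <;> simp [Matrix.cons_val_zero, Matrix.cons_val_one]
  refine ⟨?_, ?_, ?_⟩
  · intro i u hu
    fin_cases i
    · rcases hu with h | h | h <;> subst h
      · exact ⟨_, J1, fun x _ => rfl⟩
      · exact ⟨_, J2, fun x _ => rfl⟩
      · exact ⟨_, J3, fun x _ => rfl⟩
    · simp only [Matrix.cons_val_one, Matrix.head_cons, Set.mem_setOf_eq] at hu
      rcases hu with ⟨h0, h1⟩ | ⟨h0, h1⟩ | ⟨h0, h1⟩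
      · refine ⟨_, J1, fun x hx => ?_⟩
        rcases hx with hx | hx <;> subst hx <;> simp [h0, h1]
      · refine ⟨_, J2, fun x hx => ?_⟩
        rcases hx with hx | hx <;> subst hx <;> simp [h0, h1]
      · refine ⟨_, J3, fun x hx => ?_⟩
        rcases hx with hx | hx <;> subst hx <;> simp [h0, h1]
    · simp only [Matrix.cons_val_two, Matrix.tail_cons, Matrix.head_cons, Set.mem_setOf_eq] at hu
      rcases hu with ⟨h0, h1⟩ | ⟨h0, h1⟩ | ⟨h0, h1⟩
      · refine ⟨_, J2, fun x hx => ?_⟩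
        rcases hx with hx | hx <;> subst hx <;> simp [h0, h1]
      · refine ⟨_, J1, fun x hx => ?_⟩
        rcases hx with hx | hx <;> subst hx <;> simp [h0, h1]
      · refine ⟨_, J3, fun x hx => ?_⟩
        rcases hx with hx | hx <;> subst hx <;> simp [h0, h1]
    · simp only [Set.mem_setOf_eq, Matrix.cons_val_fin_one] at hu
      rcases hu with ⟨h0, h1⟩ | ⟨h0, h1⟩ | ⟨h0, h1⟩
      · refine ⟨_, J3, fun x hx => ?_⟩
        rcases hx with hx | hx <;> subst hx <;> simp [h0, h1]
      · refine ⟨_, J1, fun x hx => ?_⟩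
        rcases hx with hx | hx <;> subst hx <;> simp [h0, h1]
      · refine ⟨_, J2, fun x hx => ?_⟩
        rcases hx with hx | hx <;> subst hx <;> simp [h0, h1]
  · intro i hi
    refine ⟨![a, b, c], ?_, fun x _ => rfl⟩
    rcases hi with hi | hi | hi <;> subst hi <;> simp
  · intro u hu hag
    rcases hu with h | h | h <;> subst h
    · exact hcc1 (by simpa using hag 2 (Set.mem_univ _))
    · exact hbb1 (by simpa using hag 1 (Set.mem_univ _))
    · exact haa1 (by simpa using hag 0 (Set.mem_univ _))
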